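/- Let κ and μ be cardinals with μ measurable, and suppose 𝒱 is a μ-complete free ultrafilter on κ extending the co-<κ filter. In the space X = κ ⊔ ω with base {V ∪ U : V ∈ 𝒱, U ∈ 𝒰} (𝒰 a free ultrafilter on ω), the intersection of fewer than μ-many dense non-separable subsets of X is itself dense in X. -/

import Mathlib

open Cardinal Set TopologicalSpace

universe u

/-- The density of a topological space: least cardinality of a dense subset. -/
noncomputable def densityCard (X : Type u) [TopologicalSpace X] : Cardinal.{u} :=
  sInf {c | ∃ D : Set X, Dense D ∧ #D = c}

/-- δ(X): the supremum of the densities of dense subspaces of `X`. -/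
noncomputable def deltaCard (X : Type u) [TopologicalSpace X] : Cardinal.{u} :=
  ⨆ D : {D : Set X // Dense D}, densityCard ↥(D.1)

/-- A π-base: a family of nonempty open sets such that every nonempty open set
contains a member of the family. -/
def IsPiBase {X : Type u} [TopologicalSpace X] (B : Set (Set X)) : Prop :=
  (∀ U ∈ B, IsOpen U ∧ U.Nonempty) ∧
  ∀ U : Set X, IsOpen U → U.Nonempty → ∃ V ∈ B, V ⊆ U

/-- The π-weight: least cardinality of a π-base. -/
noncomputable def piWeight (X : Type u) [TopologicalSpace X] : Cardinal.{u} :=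
  sInf {c | ∃ B : Set (Set X), IsPiBase B ∧ #B = c}

/-- The weight: least cardinality of a base of the topology. -/
noncomputable def weightCard (X : Type u) [TopologicalSpace X] : Cardinal.{u} :=
  sInf {c | ∃ B : Set (Set X), IsTopologicalBasis B ∧ #B = c}

/-- The set of points played by Player II before stage `β`. -/
def PlayedSet {X : Type u} (x : Ordinal.{u} → X) (β : Ordinal.{u}) : Set X :=
  {p | ∃ α < β, x α = p}

/-- Player I has a winning strategy in the open-point game `G_{X,θ}`:
there is a strategy `U` assigning to each history of points played by Player II a
nonempty open set (at positions where the played points are not yet dense), depending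
only on the initial segment of the history, such that in every run in which Player II
plays legally, the set of played points becomes dense at some stage `β < θ`. -/
def PlayerIWins (X : Type u) [TopologicalSpace X] (θ : Ordinal.{u}) : Prop :=
  ∃ U : (Ordinal.{u} → X) → Ordinal.{u} → Set X,
    (∀ x β, ¬ Dense (PlayedSet x β) → IsOpen (U x β) ∧ (U x β).Nonempty) ∧
    (∀ x y β, (∀ α < β, x α = y α) → U x β = U y β) ∧
    ∀ x : Ordinal.{u} → X, (∀ β < θ, ¬ Dense (PlayedSet x β) → x β ∈ U x β) →
      ∃ β < θ, Dense (PlayedSet x β)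

/-- gd(X): the least infinite cardinal κ such that Player I has a winning strategy
in the open-point game `G_{X,κ⁺}`. -/
noncomputable def gd (X : Type u) [TopologicalSpace X] : Cardinal.{u} :=
  sInf {κ | ℵ₀ ≤ κ ∧ PlayerIWins X (Order.succ κ).ord}

/-- Suppose `μ` is measurable (there is a `μ`-complete free ultrafilter
on `μ`, `μ` uncountable) and `𝒱` is a `μ`-complete free ultrafilter on `κ` extending
the co-`<κ` filter. In the space `X = κ ⊔ ω` with base `{V ∪ U : V ∈ 𝒱, U ∈ 𝒰}`,
the intersection of fewer than `μ`-many dense non-separable subsets is dense. -/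
theorem stmt11 (κ μ : Cardinal.{u}) (hκ : ℵ₀ < κ)
    (hμmeas : ℵ₀ < μ ∧ ∃ W : Ultrafilter μ.ord.ToType,
      (∀ x, (W : Filter μ.ord.ToType) ≠ pure x) ∧
      ∀ s : Set (Set μ.ord.ToType), #s < μ → (∀ v ∈ s, v ∈ W) → ⋂₀ s ∈ W)
    (𝒱 : Ultrafilter κ.ord.ToType)
    (h𝒱 : ∀ s : Set κ.ord.ToType, #↥(sᶜ) < κ → s ∈ 𝒱)
    (h𝒱compl : ∀ s : Set (Set κ.ord.ToType), #s < μ → (∀ v ∈ s, v ∈ 𝒱) → ⋂₀ s ∈ 𝒱)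
    (𝒰 : Ultrafilter ℕ) (h𝒰 : (𝒰 : Filter ℕ) ≤ Filter.cofinite)
    [t : TopologicalSpace (κ.ord.ToType ⊕ ℕ)]
    (ht : t = TopologicalSpace.generateFrom
      {s | ∃ V ∈ 𝒱, ∃ U ∈ 𝒰, s = Sum.inl '' V ∪ Sum.inr '' U})
    (ι : Type u) (hι : #ι < μ) (A : ι → Set (κ.ord.ToType ⊕ ℕ))
    (hdense : ∀ i, Dense (A i))
    (hnonsep : ∀ i, ¬ SeparableSpace ↥(A i)) :
    Dense (⋂ i, A i) := by
  set B : Set (Set (κ.ord.ToType ⊕ ℕ)) :=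
    {s | ∃ V ∈ 𝒱, ∃ U ∈ 𝒰, s = Sum.inl '' V ∪ Sum.inr '' U} with hB
  -- basics closed under intersection
  have hinter : ∀ ⦃s⦄, s ∈ B → ∀ ⦃u⦄, u ∈ B → s ∩ u ∈ B := by
    rintro _ ⟨V₁, hV₁, U₁, hU₁, rfl⟩ _ ⟨V₂, hV₂, U₂, hU₂, rfl⟩
    refine ⟨V₁ ∩ V₂, 𝒱.inter_mem hV₁ hV₂, U₁ ∩ U₂, 𝒰.inter_mem hU₁ hU₂, ?_⟩
    ext x; cases x <;> simp [Sum.inl.injEq, Sum.inr.injEq] <;> tauto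
  have hbasis : IsTopologicalBasis (insert Set.univ B) :=
    isTopologicalBasis_of_subbasis_of_inter ht hinter
  -- each basic set is nonempty
  have hbne : ∀ s ∈ B, s.Nonempty := by
    rintro _ ⟨V, hV, U, hU, rfl⟩
    obtain ⟨v, hv⟩ := 𝒱.nonempty_of_mem hV
    exact ⟨Sum.inl v, Or.inl ⟨v, hv, rfl⟩⟩
  -- key step: for each i, Sum.inl ⁻¹' A i ∈ 𝒱
  have hkey : ∀ i, Sum.inl ⁻¹' A i ∈ 𝒱 := by
    intro i
    by_contra hV
    -- then inr ⁻¹' A i ∈ 𝒰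
    have hU : Sum.inr ⁻¹' A i ∈ 𝒰 := by
      by_contra hU
      have hVc : (Sum.inl ⁻¹' A i)ᶜ ∈ 𝒱 := (Ultrafilter.compl_mem_iff_notMem).2 hV
      have hUc : (Sum.inr ⁻¹' A i)ᶜ ∈ 𝒰 := (Ultrafilter.compl_mem_iff_notMem).2 hU
      have hBopen : IsOpen (Sum.inl '' (Sum.inl ⁻¹' A i)ᶜ ∪ Sum.inr '' (Sum.inr ⁻¹' A i)ᶜ) := by
        rw [ht]; exact TopologicalSpace.GenerateOpen.basic _ ⟨_, hVc, _, hUc, rfl⟩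
      obtain ⟨x, hx1, hx2⟩ := (dense_iff_inter_open.1 (hdense i)) _ hBopen
        (hbne _ ⟨_, hVc, _, hUc, rfl⟩)
      rcases hx1 with ⟨v, hv, rfl⟩ | ⟨n, hn, rfl⟩
      · exact hv hx2
      · exact hn hx2
    -- A i is separable: the inr-part is countable dense
    refine hnonsep i ⟨⟨{x : ↥(A i) | ∃ n, x.1 = Sum.inr n}, ?_, ?_⟩⟩
    · have : {x : ↥(A i) | ∃ n, x.1 = Sum.inr n} =
          Subtype.val ⁻¹' (range Sum.inr) := by
        ext x; simp [Set.range, eq_comm]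
      rw [this]
      exact (countable_range _).preimage Subtype.val_injective
    · rw [dense_iff_inter_open]
      rintro W hW hWne
      obtain ⟨O, hO, rfl⟩ := isOpen_induced_iff.1 hW
      obtain ⟨⟨a, haA⟩, haO⟩ := hWne
      obtain ⟨o, ho, hao, hoO⟩ := hbasis.exists_subset_of_mem_open haO hO
      rcases ho with rfl | ⟨V, hVmem, U, hUmem, rfl⟩
      · obtain ⟨n, hn⟩ := 𝒰.nonempty_of_mem hU
        exact ⟨⟨Sum.inr n, hn⟩, hoO trivial, n, rfl⟩
      · obtain ⟨n, hn1, hn2⟩ := 𝒰.nonempty_of_mem (𝒰.inter_mem hUmem hU)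
        exact ⟨⟨Sum.inr n, hn2⟩, hoO (Or.inr ⟨n, hn1, rfl⟩), n, rfl⟩
  -- the intersection of the preimages is in 𝒱
  have hP : (⋂ i, Sum.inl ⁻¹' A i) ∈ 𝒱 := by
    have h1 : #(range fun i => Sum.inl ⁻¹' A i) < μ := (mk_range_le).trans_lt hι
    have h2 := h𝒱compl _ h1 (by rintro v ⟨i, rfl⟩; exact hkey i)
    rwa [sInter_range] at h2
  -- conclude density
  rw [hbasis.dense_iff]
  rintro o (rfl | ⟨V, hVmem, U, hUmem, rfl⟩) hone
  · obtain ⟨x, hx⟩ := 𝒱.nonempty_of_mem hP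
    exact ⟨Sum.inl x, Set.mem_univ _, by simpa using fun i => mem_iInter.1 hx i⟩
  · obtain ⟨x, hx1, hx2⟩ := 𝒱.nonempty_of_mem (𝒱.inter_mem hVmem hP)
    exact ⟨Sum.inl x, Or.inl ⟨x, hx1, rfl⟩, by simpa using fun i => mem_iInter.1 hx2 i⟩
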